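/- Let ξ be a density operator on a finite-dimensional Hilbert space with tr(ξ²) ≥ 1 − γ for some γ ∈ (0,1). Then there exists a pure state |ψ⟩ such that the trace distance satisfies D(ξ, |ψ⟩⟨ψ|) ≤ γ. -/

import Mathlib

open Matrix
open scoped ComplexOrder

/-- The trace norm `‖A‖₁ = tr √(A†A)` of a complex matrix. -/
noncomputable def traceNorm {m : Type*} [Fintype m] [DecidableEq m]
    (A : Matrix m m ℂ) : ℝ :=
  (((Matrix.posSemidef_conjTranspose_mul_self A).1.eigenvectorUnitary.1 *
    diagonal (((↑) : ℝ → ℂ) ∘ (√·) ∘ (Matrix.posSemidef_conjTranspose_mul_self A).1.eigenvalues) *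
    (star (Matrix.posSemidef_conjTranspose_mul_self A).1.eigenvectorUnitary :
      Matrix m m ℂ)).trace).re

lemma conj_diag_mul {n : ℕ} (V : Matrix (Fin n) (Fin n) ℂ) (hV : V ∈ Matrix.unitaryGroup (Fin n) ℂ)
    (c e : Fin n → ℂ) :
    (V * diagonal c * star V) * (V * diagonal e * star V)
      = V * diagonal (fun i => c i * e i) * star V := by
  have h1 : star V * V = 1 := hV.1
  rw [← Matrix.diagonal_mul_diagonal]
  simp only [Matrix.mul_assoc]
  rw [← Matrix.mul_assoc (star V) V, h1, Matrix.one_mul]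

open scoped MatrixOrder in
lemma traceNorm_conj {n : ℕ} (V : Matrix (Fin n) (Fin n) ℂ)
    (hV : V ∈ Matrix.unitaryGroup (Fin n) ℂ) (d : Fin n → ℝ) :
    traceNorm (V * diagonal (fun i => (d i : ℂ)) * star V) = ∑ i, |d i| := by
  set A := V * diagonal (fun i => (d i : ℂ)) * star V with hA
  set B := V * diagonal (fun i => ((|d i| : ℝ) : ℂ)) * star V with hB
  have hBpsd : B.PosSemidef := by
    rw [hB, Matrix.star_eq_conjTranspose]
    exact Matrix.PosSemidef.mul_mul_conjTranspose_same
      (Matrix.posSemidef_diagonal_iff.mpr fun i => by positivity) V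
  have hstar : star (fun i => ((d i : ℝ) : ℂ)) = fun i => ((d i : ℝ) : ℂ) := by
    funext i; simp [Complex.conj_ofReal]
  have hAH : Aᴴ = A := by
    rw [hA, Matrix.star_eq_conjTranspose, Matrix.conjTranspose_mul, Matrix.conjTranspose_mul,
      Matrix.conjTranspose_conjTranspose, Matrix.diagonal_conjTranspose, hstar, Matrix.mul_assoc]
  have hB2 : B ^ 2 = Aᴴ * A := by
    have hfun : (fun i => ((|d i| : ℝ) : ℂ) * ((|d i| : ℝ) : ℂ))
        = fun i => ((d i : ℝ) : ℂ) * ((d i : ℝ) : ℂ) := by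
      funext i
      rw [← Complex.ofReal_mul, ← Complex.ofReal_mul, abs_mul_abs_self]
    rw [hAH, pow_two, hA, hB, conj_diag_mul V hV, conj_diag_mul V hV, hfun]
  have hsqrt : (Matrix.posSemidef_conjTranspose_mul_self A).1.cfc Real.sqrt = B := by
    have hB0 : 0 ≤ B := hBpsd.nonneg
    have hAA : 0 ≤ Aᴴ * A := (Matrix.posSemidef_conjTranspose_mul_self A).nonneg
    have e1 := (Matrix.posSemidef_conjTranspose_mul_self A).1.cfc_eq Real.sqrt
    rw [← cfcₙ_eq_cfc, ← CFC.sqrt_eq_real_sqrt _ hAA] at e1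
    rw [← e1, ← hB2, CFC.sqrt_sq B]
  rw [traceNorm]
  change ((Matrix.posSemidef_conjTranspose_mul_self A).1.cfc Real.sqrt).trace.re = _
  rw [hsqrt, hB, Matrix.trace_mul_cycle, hV.1, Matrix.one_mul,
    Matrix.trace_diagonal]
  simp

/-- The trace distance `D(ρ, σ) = ½‖ρ − σ‖₁`. -/
noncomputable def traceDist {m : Type*} [Fintype m] [DecidableEq m]
    (A B : Matrix m m ℂ) : ℝ := traceNorm (A - B) / 2

/-- If `ξ` is a density operator with `tr(ξ²) ≥ 1 − γ` for some
`γ ∈ (0,1)`, then there is a pure state `|ψ⟩` with `D(ξ, |ψ⟩⟨ψ|) ≤ γ`. -/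
theorem stmt17 {n : ℕ} (ξ : Matrix (Fin n) (Fin n) ℂ)
    (hξ : ξ.PosSemidef) (hξ1 : ξ.trace = 1)
    (γ : ℝ) (hγ : γ ∈ Set.Ioo (0 : ℝ) 1)
    (hpur : 1 - γ ≤ ((ξ * ξ).trace).re) :
    ∃ ψ : EuclideanSpace ℂ (Fin n), ‖ψ‖ = 1 ∧
      traceDist ξ (Matrix.vecMulVec (ψ : Fin n → ℂ) (star (ψ : Fin n → ℂ))) ≤ γ := by
  obtain ⟨hγ0, hγ1⟩ := hγ
  have hH := hξ.1
  set V : Matrix (Fin n) (Fin n) ℂ := (hH.eigenvectorUnitary : Matrix (Fin n) (Fin n) ℂ) with hVdef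
  have hVmem : V ∈ Matrix.unitaryGroup (Fin n) ℂ := hH.eigenvectorUnitary.2
  set lam := hH.eigenvalues with hlam
  have hspec : ξ = V * diagonal (fun i => (lam i : ℂ)) * star V := hH.spectral_theorem
  have hnpos : 0 < n := by
    rcases Nat.eq_zero_or_pos n with h | h
    · subst h
      simp [Matrix.trace] at hξ1
    · exact h
  have : Nonempty (Fin n) := ⟨⟨0, hnpos⟩⟩
  obtain ⟨i₀, hi₀⟩ := Finite.exists_max lam
  have hnonneg : ∀ i, 0 ≤ lam i := hξ.eigenvalues_nonneg
  -- sum of eigenvalues = 1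
  have htr : ξ.trace = ∑ i, (lam i : ℂ) := by
    rw [hspec, Matrix.trace_mul_cycle, hVmem.1, Matrix.one_mul, Matrix.trace_diagonal]
  have hsum : ∑ i, lam i = 1 := by
    have := hξ1 ▸ htr
    have h2 : ((∑ i, lam i : ℝ) : ℂ) = ((1 : ℝ) : ℂ) := by push_cast; rw [← this]
    exact_mod_cast h2
  -- sum of squares
  have htr2 : ((ξ * ξ).trace).re = ∑ i, lam i ^ 2 := by
    rw [hspec, conj_diag_mul V hVmem, Matrix.trace_mul_cycle, hVmem.1, Matrix.one_mul,
      Matrix.trace_diagonal]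
    simp [pow_two]
  have hmax1 : lam i₀ ≤ 1 := by
    rw [← hsum]
    exact Finset.single_le_sum (fun i _ => hnonneg i) (Finset.mem_univ i₀)
  have hmaxge : 1 - γ ≤ lam i₀ := by
    have h1 : ∑ i, lam i ^ 2 ≤ ∑ i, lam i₀ * lam i := by
      apply Finset.sum_le_sum
      intro i _
      rw [pow_two]
      exact mul_le_mul_of_nonneg_right (hi₀ i) (hnonneg i)
    have h2 : ∑ i, lam i₀ * lam i = lam i₀ := by
      rw [← Finset.mul_sum, hsum, mul_one]
    calc 1 - γ ≤ ((ξ * ξ).trace).re := hpur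
    _ = ∑ i, lam i ^ 2 := htr2
    _ ≤ lam i₀ := h2 ▸ h1
  refine ⟨hH.eigenvectorBasis i₀, hH.eigenvectorBasis.orthonormal.1 i₀, ?_⟩
  set ψ : EuclideanSpace ℂ (Fin n) := hH.eigenvectorBasis i₀ with hψ
  have hP : Matrix.vecMulVec (ψ : Fin n → ℂ) (star (ψ : Fin n → ℂ))
      = V * diagonal (fun i => if i = i₀ then (1 : ℂ) else 0) * star V := by
    ext j k
    rw [Matrix.vecMulVec_apply, Matrix.mul_apply]
    simp only [Matrix.mul_diagonal, Matrix.star_eq_conjTranspose, Matrix.conjTranspose_apply,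
      Pi.star_apply]
    rw [Finset.sum_eq_single i₀ (fun b _ hb => by simp [hb]) (by simp)]
    simp [hVdef, hψ, Matrix.IsHermitian.eigenvectorUnitary_apply]
  have hdiff : ξ - Matrix.vecMulVec (ψ : Fin n → ℂ) (star (ψ : Fin n → ℂ))
      = V * diagonal (fun i => ((lam i - if i = i₀ then 1 else 0 : ℝ) : ℂ)) * star V := by
    rw [hP, hspec, ← Matrix.sub_mul, ← Matrix.mul_sub]
    congr 2
    ext i j
    rcases eq_or_ne i j with rfl | hij
    · by_cases h : i = i₀ <;> simp [Matrix.sub_apply, Matrix.diagonal_apply_eq, h]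
    · simp [Matrix.sub_apply, Matrix.diagonal_apply_ne _ hij]
  have hsumabs : ∑ i, |lam i - if i = i₀ then 1 else 0| = 2 * (1 - lam i₀) := by
    rw [← Finset.add_sum_erase _ _ (Finset.mem_univ i₀)]
    have h1 : ∑ i ∈ Finset.univ.erase i₀, |lam i - if i = i₀ then 1 else 0|
        = ∑ i ∈ Finset.univ.erase i₀, lam i := by
      apply Finset.sum_congr rfl
      intro i hi
      rw [if_neg (Finset.mem_erase.mp hi).1, sub_zero, abs_of_nonneg (hnonneg i)]
    have h2 : ∑ i ∈ Finset.univ.erase i₀, lam i = 1 - lam i₀ := by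
      have := Finset.add_sum_erase _ lam (Finset.mem_univ i₀)
      rw [hsum] at this
      linarith
    rw [h1, h2, if_pos rfl, abs_of_nonpos (by linarith), neg_sub]
    ring
  rw [traceDist, hdiff, traceNorm_conj V hVmem, hsumabs]
  linarith
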